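/- Let H be an odd-connected hypergraph all of whose hyperedges have even size. Then: (a) the all-ones state 1 is a fixed point of the two-party voter model; (b) from any state other than 1, the all-zero state 0 is reachable; and (c) every stabilizing set B for the annihilating random walk on H has even cardinality, so in state 1 parity is reached on every stabilizing set. -/
import Mathlib


/-- One move of the two-party voter model on a hypergraph: choose a vertex `i` and a
hyperedge `e ∋ i` and set `A_i` to the XOR of the labels of the other vertices of `e`. -/
def voterMove {V : Type*} [DecidableEq V] (E : Finset (Finset V))
    (A A' : V → ZMod 2) : Prop :=
  ∃ i : V, ∃ e ∈ E, i ∈ e ∧ A' = Function.update A i (∑ j ∈ e.erase i, A j)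

lemma sum_eq_card_filter {V : Type*} [DecidableEq V] (A : V → ZMod 2) (s : Finset V) :
    ∑ j ∈ s, A j = ((s.filter (fun v => A v = 1)).card : ZMod 2) := by
  rw [← Finset.sum_filter_add_sum_filter_not s (fun v => A v = 1)]
  have h1 : ∑ j ∈ s.filter (fun v => A v = 1), A j
      = ((s.filter (fun v => A v = 1)).card : ZMod 2) := by
    rw [Finset.sum_congr rfl (fun j hj => (Finset.mem_filter.mp hj).2)]
    simp
  have h2 : ∑ j ∈ s.filter (fun v => ¬ A v = 1), A j = 0 := by
    apply Finset.sum_eq_zero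
    intro j hj
    have := (Finset.mem_filter.mp hj).2
    revert this; generalize A j = a; revert a; decide
  rw [h1, h2, add_zero]

lemma odd_cast_one (n : ℕ) (hn : Odd n) : (n : ZMod 2) = 1 := by
  obtain ⟨k, rfl⟩ := hn
  push_cast
  have : (2 : ZMod 2) = 0 := by decide
  rw [this]; ring

/-- Let `H` be an odd-connected hypergraph all of whose hyperedges have even size. Then:
(a) the all-ones state is a fixed point of the two-party voter model; (b) from any state
other than all-ones, the all-zero state is reachable; (c) every stabilizing set `B` for
the annihilating random walk on `H` (i.e. the GF(2) system `∑_{e∋v} x_e = 1_B(v)` is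
solvable) has even cardinality, so in the all-ones state parity is reached on `B`. -/
theorem stmt_16 {V : Type*} [Fintype V] [DecidableEq V]
    (E : Finset (Finset V))
    (hoddconn : ¬ ∃ B : Finset V, B ≠ ∅ ∧ B ≠ Finset.univ ∧
      ∀ e ∈ E, Even ((B ∩ e).card))
    (heven : ∀ e ∈ E, Even e.card) :
    (∀ A' : V → ZMod 2, voterMove E (fun _ => 1) A' → A' = fun _ => 1) ∧
    (∀ A : V → ZMod 2, A ≠ (fun _ => 1) →
      Relation.ReflTransGen (voterMove E) A (fun _ => 0)) ∧
    (∀ B : Finset V,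
      (∃ z : Finset V → ZMod 2,
        ∀ v : V, ∑ e ∈ E.filter (fun e => v ∈ e), z e = (if v ∈ B then 1 else 0)) →
      Even B.card ∧ ∑ _v ∈ B, (1 : ZMod 2) = 0) := by
  refine ⟨?_, ?_, ?_⟩
  · -- (a)
    rintro A' ⟨i, e, he, hie, rfl⟩
    funext v
    rcases eq_or_ne v i with rfl | hv
    · rw [Function.update_self]
      have hc : Odd (e.erase v).card := by
        rw [Finset.card_erase_of_mem hie]
        rcases heven e he with ⟨k, hk⟩
        have hk1 : 1 ≤ e.card := Finset.card_pos.mpr ⟨v, hie⟩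
        exact ⟨k - 1, by omega⟩
      have : ∑ j ∈ e.erase v, (1 : ZMod 2) = ((e.erase v).card : ZMod 2) := by simp
      rw [this, odd_cast_one _ hc]
    · rw [Function.update_of_ne hv]
  · -- (b)
    intro A hA
    set n := (Finset.univ.filter (fun v => A v = 1)).card with hn
    clear_value n
    induction n using Nat.strong_induction_on generalizing A with
    | _ n ih =>
      set S := Finset.univ.filter (fun v => A v = 1) with hS
      rcases eq_or_ne S ∅ with hSe | hSe
      · -- A is all zero
        have : A = fun _ => 0 := by
          funext v
          have hv : v ∉ S := by rw [hSe]; exact Finset.notMem_empty v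
          have : ¬ A v = 1 := by
            intro h; exact hv (Finset.mem_filter.mpr ⟨Finset.mem_univ v, h⟩)
          revert this; generalize A v = a; revert a; decide
        rw [this]
      · have hSu : S ≠ Finset.univ := by
          intro h
          apply hA
          funext v
          have : v ∈ S := h ▸ Finset.mem_univ v
          exact (Finset.mem_filter.mp this).2
        -- odd connectedness gives an edge with odd intersection
        have : ∃ e ∈ E, ¬ Even ((S ∩ e).card) := by
          by_contra h
          push_neg at h
          exact hoddconn ⟨S, hSe, hSu, h⟩
        obtain ⟨e, he, hodd⟩ := this
        rw [Nat.not_even_iff_odd] at hodd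
        have hne : (S ∩ e).Nonempty := by
          rcases hodd with ⟨k, hk⟩
          exact Finset.card_pos.mp (by omega)
        obtain ⟨i, hi⟩ := hne
        have hiS : i ∈ S := (Finset.mem_inter.mp hi).1
        have hie : i ∈ e := (Finset.mem_inter.mp hi).2
        have hAi : A i = 1 := (Finset.mem_filter.mp hiS).2
        -- the move at i sets A i to 0
        set A' := Function.update A i (∑ j ∈ e.erase i, A j) with hA'
        have hsum : ∑ j ∈ e.erase i, A j = 0 := by
          rw [sum_eq_card_filter]
          have hfe : (e.erase i).filter (fun v => A v = 1) = (S ∩ e).erase i := by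
            ext v
            simp only [Finset.mem_filter, Finset.mem_erase, Finset.mem_inter, hS,
              Finset.mem_univ, true_and]
            tauto
          rw [hfe, Finset.card_erase_of_mem hi]
          rcases hodd with ⟨k, hk⟩
          rw [hk]
          simp only [Nat.add_sub_cancel]
          push_cast
          have : (2 : ZMod 2) = 0 := by decide
          rw [this]; ring
        have hmove : voterMove E A A' := ⟨i, e, he, hie, rfl⟩
        have hS' : Finset.univ.filter (fun v => A' v = 1) = S.erase i := by
          ext v
          simp only [Finset.mem_filter, Finset.mem_erase, Finset.mem_univ, true_and, hS]
          rcases eq_or_ne v i with rfl | hv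
          · simp [hA', hsum]
          · simp [hA', Function.update_of_ne hv, hv]
        have hcard : (S.erase i).card < n := by
          rw [hn, Finset.card_erase_of_mem hiS]
          have : 0 < S.card := Finset.card_pos.mpr ⟨i, hiS⟩
          omega
        have hA'ne : A' ≠ fun _ => 1 := by
          intro h
          have : A' i = 1 := congrFun h i
          rw [hA', Function.update_self, hsum] at this
          exact absurd this (by decide)
        exact Relation.ReflTransGen.head hmove
          (ih (S.erase i).card hcard A' hA'ne (by rw [hS']))
  · -- (c)
    intro B ⟨z, hz⟩
    have key : (B.card : ZMod 2) = 0 := by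
      have h1 : ∑ v : V, ∑ e ∈ E.filter (fun e => v ∈ e), z e
          = ∑ v : V, (if v ∈ B then (1 : ZMod 2) else 0) :=
        Finset.sum_congr rfl (fun v _ => hz v)
      have h2 : ∑ v : V, (if v ∈ B then (1 : ZMod 2) else 0) = (B.card : ZMod 2) := by
        rw [Finset.sum_ite_mem, Finset.univ_inter]
        simp
      have h3 : ∑ v : V, ∑ e ∈ E.filter (fun e => v ∈ e), z e = 0 := by
        rw [Finset.sum_comm' (t' := E) (s' := fun e => Finset.univ.filter (fun v => v ∈ e))
          (fun v e => by simp [and_comm])]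
        apply Finset.sum_eq_zero
        intro e he
        have hc : ∑ _v ∈ Finset.univ.filter (fun v => v ∈ e), z e
            = ((Finset.univ.filter (fun v => v ∈ e)).card : ZMod 2) * z e := by
          simp [Finset.sum_const, nsmul_eq_mul]
        rw [hc]
        have hfe : Finset.univ.filter (fun v => v ∈ e) = e := by
          ext v; simp
        rw [hfe]
        rcases heven e he with ⟨k, hk⟩
        rw [hk]
        push_cast
        have h20 : (2 : ZMod 2) = 0 := by decide
        rw [show ((k : ZMod 2) + k) = 2 * k by ring, h20]
        ring
      rw [h1, h2] at h3
      exact h3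
    constructor
    · have := (ZMod.natCast_eq_zero_iff B.card 2).mp key
      exact even_iff_two_dvd.mpr this
    · simp [key]
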